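/- Let T be a surjective linear mapping between two semisimple unital complex Banach algebras B and A that is spectrum-preserving, i.e., σ(T x) = σ(x) for all x ∈ B. Then T is unital: T(1) = 1. -/

import Mathlib

/-- A surjective spectrum-preserving linear map between semisimple unital complex
Banach algebras is unital. -/
theorem unital_of_spectrum_preserving
    {B A : Type*} [NormedRing B] [NormedAlgebra ℂ B] [CompleteSpace B]
    [NormedRing A] [NormedAlgebra ℂ A] [CompleteSpace A]
    (hBss : TwoSidedIdeal.jacobson (⊥ : TwoSidedIdeal B) = ⊥)
    (hAss : TwoSidedIdeal.jacobson (⊥ : TwoSidedIdeal A) = ⊥)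
    (T : B →ₗ[ℂ] A)
    (hTsurj : Function.Surjective T)
    (hTspec : ∀ x : B, spectrum ℂ (T x) = spectrum ℂ x) :
    T 1 = 1 := by
  set q : A := T 1 - 1 with hqdef
  -- Key: adding any multiple of q does not change the spectrum.
  have hq : ∀ (y : A) (lam : ℂ), spectrum ℂ (y + lam • q) = spectrum ℂ y := by
    intro y lam
    obtain ⟨x, rfl⟩ := hTsurj y
    have h1 : T x + lam • q = T (x + lam • 1) - algebraMap ℂ A lam := by
      simp only [map_add, map_smul, hqdef, Algebra.algebraMap_eq_smul_one]
      module
    rw [h1, ← spectrum.sub_singleton_eq, hTspec,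
      show x + lam • (1 : B) = x + algebraMap ℂ B lam by
        rw [Algebra.algebraMap_eq_smul_one],
      ← spectrum.add_singleton_eq, hTspec]
    ext z
    constructor
    · rintro ⟨w, hw, μ, hμ, rfl⟩
      obtain ⟨a, ha, b, hb, rfl⟩ := hw
      simp only [Set.mem_singleton_iff] at hb hμ
      subst hb; subst hμ
      simpa using ha
    · intro hz
      exact ⟨z + lam, ⟨z, hz, lam, rfl, rfl⟩, lam, rfl, by ring⟩
  -- q itself is quasinilpotent.
  have hq0 : ∀ lam : ℂ, spectrum ℂ (lam • q) = spectrum ℂ (0 : A) := by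
    intro lam; simpa using hq 0 lam
  -- 1 + w * q is a unit for every invertible w.
  have hunit : ∀ w : A, IsUnit w → IsUnit (1 + w * q) := by
    rintro w ⟨u, rfl⟩
    have h1 : IsUnit ((u⁻¹ : Aˣ) + q) := by
      have := hq ((u⁻¹ : Aˣ) : A) 1
      rw [one_smul] at this
      have h0 : (0 : ℂ) ∉ spectrum ℂ (((u⁻¹ : Aˣ) : A) + q) := by
        rw [this, spectrum.zero_notMem_iff]
        exact (u⁻¹).isUnit
      exact (spectrum.zero_notMem_iff ℂ).mp h0
    have : (1 : A) + (u : A) * q = (u : A) * (((u⁻¹ : Aˣ) : A) + q) := by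
      rw [mul_add, Units.mul_inv_eq_one.mpr rfl]
    rw [this]
    exact u.isUnit.mul h1
  -- 1 + y * q is a unit for every y.
  have hall : ∀ y : A, IsUnit (1 + y * q) := by
    intro y
    obtain ⟨r, hr⟩ := (spectrum.isBounded (𝕜 := ℂ) y).subset_closedBall 0
    set mu : ℂ := ((|r| + 1 : ℝ) : ℂ) with hmu
    have hmu0 : mu ≠ 0 := by
      simp only [hmu, Ne, Complex.ofReal_eq_zero]
      positivity
    have hmuσ : mu ∉ spectrum ℂ y := by
      intro h
      have := hr h
      simp only [Metric.mem_closedBall, dist_zero_right, hmu, Complex.norm_real,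
        Real.norm_eq_abs, abs_of_nonneg (by positivity : (0:ℝ) ≤ |r| + 1)] at this
      linarith [le_abs_self r, abs_nonneg r]
    have hu0 : IsUnit (algebraMap ℂ A mu - y) := spectrum.notMem_iff.mp hmuσ
    -- 1 - mu • q is a unit since q is quasinilpotent
    have hc : IsUnit (1 + mu • q) := by
      have h0 : (0 : ℂ) ∉ spectrum ℂ (1 + mu • q) := by
        have := hq 1 mu
        rw [this]
        rw [spectrum.zero_notMem_iff]
        exact isUnit_one
      exact (spectrum.zero_notMem_iff ℂ).mp h0
    obtain ⟨c, hc⟩ := hc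
    -- write 1 + y*q = (1 + mu•q) * (1 + (c⁻¹ * (y - mu)) * q)
    have hu1 : IsUnit (y - algebraMap ℂ A mu) := by
      rw [← neg_sub]; exact hu0.neg
    have key : IsUnit (1 + ((c⁻¹ : Aˣ) * (y - algebraMap ℂ A mu)) * q) := by
      apply hunit
      exact (c⁻¹).isUnit.mul hu1
    have factor : (1 : A) + y * q = (c : A) * (1 + ((c⁻¹ : Aˣ) * (y - algebraMap ℂ A mu)) * q) := by
      have h2 : (c : A) * ((c⁻¹ : Aˣ) : A) = 1 := c.mul_inv
      rw [mul_add, mul_one, ← mul_assoc, ← mul_assoc, h2, one_mul, hc, Algebra.smul_def, sub_mul]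
      noncomm_ring
    rw [factor]
    exact c.isUnit.mul key
  -- hence q lies in the Jacobson radical, which is ⊥
  have hmem : q ∈ TwoSidedIdeal.jacobson (⊥ : TwoSidedIdeal A) := by
    rw [TwoSidedIdeal.mem_jacobson_iff]
    intro y
    obtain ⟨z, hz⟩ := (hall y).exists_left_inv
    refine ⟨z, ?_⟩
    have : z * y * q + z - 1 = z * (1 + y * q) - 1 := by noncomm_ring
    rw [this, hz, sub_self]
    exact TwoSidedIdeal.zero_mem _
  rw [hAss] at hmem
  have : q = 0 := hmem
  have := sub_eq_zero.mp this
  exact this
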